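/- Let G = ⟨a, b | [a,[a,b]] central relations making G nilpotent of class 3, specifically [a,g] = [b,g] = [a,h] = [b,h] = e where c = [a,b], g = [a,c], h = [b,c]⟩, the free nilpotent group of class 3 on two generators. If w is a word in the letters {a,b} of length 2l with w̄ = g^m h^n (ab)^l-bar (i.e., w̄ equals g^m h^n times the element represented by (ab)^l), then m − n ≥ 0, and m − n > 0 unless w = (ab)^l. -/

import Mathlib

namespace Stmt19

/-- The commutator with the convention of the paper: `[u,v] = u⁻¹v⁻¹uv`. -/
def pcomm {G : Type*} [Group G] (u v : G) : G := u⁻¹ * v⁻¹ * u * v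

/-- The generator `a` of the free group on two generators. -/
def A : FreeGroup Bool := FreeGroup.of true
/-- The generator `b`. -/
def B : FreeGroup Bool := FreeGroup.of false
/-- `c = [a,b]`. -/
def C : FreeGroup Bool := pcomm A B
/-- `g = [a,c]`. -/
def Gg : FreeGroup Bool := pcomm A C
/-- `h = [b,c]`. -/
def Hh : FreeGroup Bool := pcomm B C

/-- The relations `[a,g] = [b,g] = [a,h] = [b,h] = e` making the group nilpotent of
class 3 (the free nilpotent group of class 3 on two generators). -/
def rels : Set (FreeGroup Bool) := {pcomm A Gg, pcomm B Gg, pcomm A Hh, pcomm B Hh}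

/-- The group `G = ⟨a, b ∣ [a,g] = [b,g] = [a,h] = [b,h] = e⟩`. -/
abbrev G := PresentedGroup rels

/-- The projection from the free group to `G`. -/
def π : FreeGroup Bool →* G := PresentedGroup.mk rels

/-- Concrete model: coordinates `(I,J,k,p,q)` for `g^(I/2) h^(J/2) c^k b^p a^q`. -/
@[ext] structure Mo where
  I : ℤ
  J : ℤ
  k : ℤ
  p : ℤ
  q : ℤ

namespace Mo

instance : Mul Mo :=
  ⟨fun x y => ⟨x.I + y.I + 2*x.q*y.k + y.p*x.q*(x.q+1),
               x.J + y.J + 2*x.p*y.k + x.q*y.p*(2*x.p+y.p+1),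
               x.k + y.k + x.q*y.p, x.p + y.p, x.q + y.q⟩⟩

instance : One Mo := ⟨⟨0,0,0,0,0⟩⟩

instance : Inv Mo :=
  ⟨fun x => ⟨-x.I + 2*x.q*x.k - x.p*x.q*(x.q-1),
             -x.J + 2*x.p*x.k - x.p*x.q*(x.p-1),
             x.p*x.q - x.k, -x.p, -x.q⟩⟩

@[simp] lemma mul_I (x y : Mo) : (x*y).I = x.I + y.I + 2*x.q*y.k + y.p*x.q*(x.q+1) := rfl
@[simp] lemma mul_J (x y : Mo) : (x*y).J = x.J + y.J + 2*x.p*y.k + x.q*y.p*(2*x.p+y.p+1) := rfl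
@[simp] lemma mul_k (x y : Mo) : (x*y).k = x.k + y.k + x.q*y.p := rfl
@[simp] lemma mul_p (x y : Mo) : (x*y).p = x.p + y.p := rfl
@[simp] lemma mul_q (x y : Mo) : (x*y).q = x.q + y.q := rfl
@[simp] lemma one_I : (1 : Mo).I = 0 := rfl
@[simp] lemma one_J : (1 : Mo).J = 0 := rfl
@[simp] lemma one_k : (1 : Mo).k = 0 := rfl
@[simp] lemma one_p : (1 : Mo).p = 0 := rfl
@[simp] lemma one_q : (1 : Mo).q = 0 := rfl
@[simp] lemma inv_I (x : Mo) : (x⁻¹).I = -x.I + 2*x.q*x.k - x.p*x.q*(x.q-1) := rfl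
@[simp] lemma inv_J (x : Mo) : (x⁻¹).J = -x.J + 2*x.p*x.k - x.p*x.q*(x.p-1) := rfl
@[simp] lemma inv_k (x : Mo) : (x⁻¹).k = x.p*x.q - x.k := rfl
@[simp] lemma inv_p (x : Mo) : (x⁻¹).p = -x.p := rfl
@[simp] lemma inv_q (x : Mo) : (x⁻¹).q = -x.q := rfl

instance : Group Mo where
  mul_assoc x y z := by ext <;> simp <;> ring
  one_mul x := by ext <;> simp
  mul_one x := by ext <;> simp
  inv_mul_cancel x := by ext <;> simp <;> ring

end Mo

def Ma : Mo := ⟨0,0,0,0,1⟩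
def Mb : Mo := ⟨0,0,0,1,0⟩

/-- Elements with vanishing `k, p, q` are central. -/
lemma central_mul_comm (x y : Mo) (hk : x.k = 0) (hp : x.p = 0) (hq : x.q = 0) :
    x * y = y * x := by
  ext <;> simp [hk, hp, hq] <;> ring

lemma pcomm_eq_one_of_central (u v : Mo) (hk : v.k = 0) (hp : v.p = 0) (hq : v.q = 0) :
    pcomm u v = 1 := by
  have h := central_mul_comm v⁻¹ u (by simp [hk, hp, hq]) (by simp [hp]) (by simp [hq])
  show u⁻¹ * v⁻¹ * u * v = 1
  rw [mul_assoc u⁻¹, h]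
  group

lemma map_pcomm {H K : Type*} [Group H] [Group K] (f : H →* K) (u v : H) :
    f (pcomm u v) = pcomm (f u) (f v) := by simp [pcomm]

def φf : Bool → Mo := fun s => if s then Ma else Mb

lemma lift_A : FreeGroup.lift φf A = Ma := FreeGroup.lift_apply_of
lemma lift_B : FreeGroup.lift φf B = Mb := FreeGroup.lift_apply_of

lemma lift_Gg : FreeGroup.lift φf Gg = ⟨2,0,0,0,0⟩ := by
  rw [Gg, map_pcomm, C, map_pcomm, lift_A, lift_B]
  ext <;> simp [pcomm, Ma, Mb]

lemma lift_Hh : FreeGroup.lift φf Hh = ⟨0,2,0,0,0⟩ := by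
  rw [Hh, map_pcomm, C, map_pcomm, lift_A, lift_B]
  ext <;> simp [pcomm, Ma, Mb]

lemma rels_check : ∀ r ∈ rels, FreeGroup.lift φf r = 1 := by
  intro r hr
  rcases hr with h | h | h | h <;> subst h <;> rw [map_pcomm] <;>
    [rw [lift_Gg]; rw [lift_Gg]; rw [lift_Hh]; rw [lift_Hh]] <;>
    exact pcomm_eq_one_of_central _ _ rfl rfl rfl

def φ : G →* Mo := PresentedGroup.toGroup rels_check

lemma φ_π (x : FreeGroup Bool) : φ (π x) = FreeGroup.lift φf x := rfl

def wprod (w : List Bool) : Mo := (w.map φf).prod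

def s2 : ℕ → ℤ
  | 0 => 0
  | n+1 => s2 n + ((n : ℤ)+1)^2

lemma s2_succ (n : ℕ) : s2 (n+1) = s2 n + ((n : ℤ)+1)^2 := rfl

def Ew (w : List Bool) : ℤ :=
  (wprod w).I - (wprod w).J - (wprod w).k + s2 (w.count false)

def pat (l : ℕ) : List Bool := (List.replicate l [true, false]).flatten

lemma wprod_append (w v : List Bool) : wprod (w ++ v) = wprod w * wprod v := by
  simp [wprod]

lemma wprod_true : wprod [true] = Ma := by simp [wprod, φf]
lemma wprod_false : wprod [false] = Mb := by simp [wprod, φf]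

lemma main (w : List Bool) :
    (wprod w).p = (w.count false : ℤ) ∧ (wprod w).q = (w.count true : ℤ) ∧
    0 ≤ Ew w ∧ (Ew w = 0 → w.count false ≤ w.count true ∧
      w = (List.replicate (w.count false) [true, false]).flatten
        ++ List.replicate (w.count true - w.count false) true) := by
  induction w using List.reverseRecOn with
  | nil =>
      refine ⟨by simp [wprod], by simp [wprod], by simp [Ew, wprod, s2], fun _ => ⟨le_refl _, by simp [wprod]⟩⟩
  | append_singleton w s ih =>
      obtain ⟨hp, hq, hE, heq⟩ := ih
      cases s
      · -- append false
        have hw : wprod (w ++ [false]) = wprod w * Mb := by rw [wprod_append, wprod_false]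
        have hcf : (w ++ [false]).count false = w.count false + 1 := by simp
        have hct : (w ++ [false]).count true = w.count true := by simp
        have hp' : (wprod (w ++ [false])).p = ((w ++ [false]).count false : ℤ) := by
          rw [hw, hcf]; push_cast; simp [Mb, hp]
        have hq' : (wprod (w ++ [false])).q = ((w ++ [false]).count true : ℤ) := by
          rw [hw, hct]; simp [Mb, hq]
        have hE' : Ew (w ++ [false]) = Ew w + ((wprod w).q - ((wprod w).p + 1))^2 := by
          rw [Ew, hw, hcf, Ew, s2_succ]
          simp [Mb]
          rw [← hp]
          ring
        refine ⟨hp', hq', by nlinarith [sq_nonneg ((wprod w).q - ((wprod w).p + 1))], ?_⟩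
        intro h0
        have hsq : ((wprod w).q - ((wprod w).p + 1))^2 = 0 ∧ Ew w = 0 := by
          constructor <;> nlinarith [sq_nonneg ((wprod w).q - ((wprod w).p + 1))]
        have hqp : (w.count true : ℤ) = (w.count false : ℤ) + 1 := by
          have := pow_eq_zero_iff (n := 2) (by norm_num) |>.mp hsq.1
          rw [hq, hp] at this
          linarith [sub_eq_zero.mp this]
        have hqpn : w.count true = w.count false + 1 := by exact_mod_cast hqp
        obtain ⟨_, hwe⟩ := heq hsq.2
        constructor
        · omega
        · have h5 : w.count true - w.count false = 1 := by omega
          rw [hct, hcf, hqpn, Nat.sub_self]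
          conv_lhs => rw [hwe, h5]
          rw [List.replicate_succ' (n := w.count false) (a := [true, false])]
          simp [List.flatten_append]
      · -- append true
        have hw : wprod (w ++ [true]) = wprod w * Ma := by rw [wprod_append, wprod_true]
        have hcf : (w ++ [true]).count false = w.count false := by simp
        have hct : (w ++ [true]).count true = w.count true + 1 := by simp
        have hp' : (wprod (w ++ [true])).p = ((w ++ [true]).count false : ℤ) := by
          rw [hw, hcf]; simp [Ma, hp]
        have hq' : (wprod (w ++ [true])).q = ((w ++ [true]).count true : ℤ) := by
          rw [hw, hct]; push_cast; simp [Ma, hq]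
        have hE' : Ew (w ++ [true]) = Ew w := by
          rw [Ew, hw, hcf, Ew]
          simp only [Mo.mul_I, Mo.mul_J, Mo.mul_k, Ma]
          ring
        refine ⟨hp', hq', by rw [hE']; exact hE, ?_⟩
        intro h0
        rw [hE'] at h0
        obtain ⟨hle, hwe⟩ := heq h0
        refine ⟨by omega, ?_⟩
        rw [hct, hcf]
        conv_lhs => rw [hwe]
        have : w.count true + 1 - w.count false = (w.count true - w.count false) + 1 := by omega
        rw [this, List.replicate_succ' (n := w.count true - w.count false) (a := true)]
        simp [List.append_assoc]

lemma pat_succ (l : ℕ) : pat (l+1) = (pat l ++ [true]) ++ [false] := by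
  rw [pat, List.replicate_succ' (n := l) (a := [true, false]), List.flatten_append]
  simp [pat]

lemma patlem (l : ℕ) : (pat l).count true = l ∧ (pat l).count false = l ∧ Ew (pat l) = 0 := by
  induction l with
  | zero => refine ⟨by simp [pat], by simp [pat], by simp [Ew, wprod, pat, s2]⟩
  | succ l ih =>
      obtain ⟨ht, hf, hE⟩ := ih
      have hct : (pat (l+1)).count true = l + 1 := by rw [pat_succ]; simp [ht]
      have hcf : (pat (l+1)).count false = l + 1 := by rw [pat_succ]; simp [hf]
      refine ⟨hct, hcf, ?_⟩
      have h1 := (main (pat l ++ [true])).1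
      have h2 := (main (pat l ++ [true])).2.1
      have hE1 : Ew (pat l ++ [true]) = Ew (pat l) := by
        rw [Ew, wprod_append, wprod_true, Ew]
        simp only [Mo.mul_I, Mo.mul_J, Mo.mul_k, Ma, List.count_append]
        norm_num [List.count_singleton]
        try ring
      have hq1 : (wprod (pat l ++ [true])).q = (l : ℤ) + 1 := by
        rw [h2]; simp [ht]
      have hp1 : (wprod (pat l ++ [true])).p = (l : ℤ) := by
        rw [h1]; simp [hf]
      have hE2 : Ew ((pat l ++ [true]) ++ [false])
          = Ew (pat l ++ [true]) + ((wprod (pat l ++ [true])).q - ((wprod (pat l ++ [true])).p + 1))^2 := by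
        rw [Ew, wprod_append, wprod_false, Ew]
        have h3 : ((pat l ++ [true]) ++ [false]).count false = (pat l ++ [true]).count false + 1 := by simp
        rw [h3, s2_succ]
        simp [Mb]
        rw [hq1, hp1, hf]
        ring
      rw [pat_succ, hE2, hE1, hE, hq1, hp1]
      ring

lemma zpow_IJ (Iv Jv m : ℤ) : (⟨Iv,Jv,0,0,0⟩ : Mo)^m = ⟨m*Iv, m*Jv, 0, 0, 0⟩ := by
  induction m using Int.induction_on with
  | zero => rw [zpow_zero]; ext <;> simp
  | succ n ih => rw [zpow_add_one, ih]; ext <;> simp <;> ring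
  | pred n ih => rw [zpow_sub_one, ih]; ext <;> simp <;> ring

lemma pow_ab (l : ℕ) : (Ma * Mb)^l = wprod (pat l) := by
  induction l with
  | zero => rw [pow_zero]; simp [pat, wprod]
  | succ l ih =>
      rw [pow_succ, ih, pat_succ, wprod_append, wprod_append, wprod_true, wprod_false,
        mul_assoc]

/-- If `w` is a word in the letters `{a,b}` (encoded as a list of booleans, `true ↦ a`,
`false ↦ b`) of length `2l` representing `g^m h^n (ab)^l` in `G`, then `m − n ≥ 0`, and
`m − n > 0` unless `w = (ab)^l`. -/
theorem stmt19 (l : ℕ) (w : List Bool) (hlen : w.length = 2 * l)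
    (m n : ℤ)
    (hrep : (w.map (fun s => if s then π A else π B)).prod
      = (π Gg) ^ m * (π Hh) ^ n * (π A * π B) ^ l) :
    0 ≤ m - n ∧ (w ≠ (List.replicate l [true, false]).flatten → 0 < m - n) := by
  have hφ : wprod w = (⟨2*m, 2*n, 0, 0, 0⟩ : Mo) * wprod (pat l) := by
    have h := congrArg φ hrep
    rw [map_list_prod] at h
    have hmap : (w.map (fun s => if s then π A else π B)).map φ = w.map φf := by
      rw [List.map_map]
      apply List.map_congr_left
      intro s _
      cases s <;> simp [φf, φ_π, lift_A, lift_B]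
    rw [hmap] at h
    rw [map_mul, map_mul, map_zpow, map_zpow, map_pow, map_mul, φ_π, φ_π, φ_π, φ_π, lift_Gg, lift_Hh,
      lift_A, lift_B, pow_ab, zpow_IJ, zpow_IJ] at h
    rw [wprod] at h ⊢
    rw [h]
    congr 1
    ext <;> simp <;> ring
  obtain ⟨hp, hq, hE, heq⟩ := main w
  obtain ⟨hpt, hpf, hpE⟩ := patlem l
  obtain ⟨hp2, hq2, -, -⟩ := main (pat l)
  have hI : (wprod w).I = 2*m + (wprod (pat l)).I := by rw [hφ]; simp
  have hJ : (wprod w).J = 2*n + (wprod (pat l)).J := by rw [hφ]; simp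
  have hk : (wprod w).k = (wprod (pat l)).k := by rw [hφ]; simp
  have hpp : (wprod w).p = (wprod (pat l)).p := by rw [hφ]; simp
  have hcf : w.count false = l := by
    have h1 : ((w.count false : ℤ)) = ((pat l).count false : ℤ) := by
      rw [← hp, ← hp2, hpp]
    rw [hpf] at h1
    exact_mod_cast h1
  have hqq : (wprod w).q = (wprod (pat l)).q := by rw [hφ]; simp
  have hct : w.count true = l := by
    have h1 : ((w.count true : ℤ)) = ((pat l).count true : ℤ) := by
      rw [← hq, ← hq2, hqq]
    rw [hpt] at h1
    exact_mod_cast h1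
  have hEw : Ew w = 2*(m - n) := by
    have h2 : Ew (pat l) = 0 := hpE
    rw [Ew, hpf] at h2
    rw [Ew, hI, hJ, hk, hcf]
    linarith
  constructor
  · linarith
  · intro hne
    rcases lt_or_eq_of_le (by linarith : (0:ℤ) ≤ m - n) with h | h
    · exact h
    · exfalso
      apply hne
      have h0 : Ew w = 0 := by rw [hEw, ← h]; ring
      obtain ⟨-, hwe⟩ := heq h0
      rw [hwe, hcf, hct, Nat.sub_self]
      simp [pat]


end Stmt19
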